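/- For all integers n ≥ k ≥ 2: if k = ⌊n/2^ℓ⌋ for some integer ℓ with 0 ≤ ℓ ≤ ⌊log₂ n⌋ − 1, then #_k S(n) = 1 + (n mod 2^ℓ); if k = ⌊n/2^ℓ⌋ − 1 for some integer ℓ with 0 ≤ ℓ and 2^ℓ ≤ n/3, then #_k S(n) = 2^ℓ − 1 − (n mod 2^ℓ); and if neither of these two cases occurs, then #_k S(n) = 0. (For given n ≥ k ≥ 2 at most one of the first two cases can occur.) -/

import Mathlib

open Nat

/-- The multiset `S n` of interval lengths: `S 0 = ∅` and
`S n = {n} ∪ S ⌊(n-1)/2⌋ ∪ S ⌈(n-1)/2⌉` (union adding multiplicities). -/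
def S : ℕ → Multiset ℕ
  | 0 => 0
  | n + 1 => (n + 1) ::ₘ (S (n / 2) + S ((n + 1) / 2))
decreasing_by all_goals omega

/-- Auxiliary count function. -/
def g (n k ℓ : ℕ) : ℕ :=
  if n / 2^ℓ = k then n % 2^ℓ + 1
  else if n / 2^ℓ = k + 1 then 2^ℓ - 1 - n % 2^ℓ
  else 0

lemma pred_div (x p : ℕ) (hx : 1 ≤ x) (hp : 0 < p) :
    ((x-1)/p = x/p ∧ (x-1)%p + 1 = x%p) ∨
    ((x-1)/p + 1 = x/p ∧ (x-1)%p + 1 = p ∧ x%p = 0) := by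
  have hlt : x % p < p := Nat.mod_lt _ hp
  rcases Nat.eq_zero_or_pos (x % p) with h0 | h0
  · right
    obtain ⟨m, hm⟩ : ∃ m, x / p = m + 1 := by
      have h1 := Nat.div_add_mod x p
      rcases Nat.eq_zero_or_pos (x/p) with h|h
      · rw [h, h0] at h1; simp at h1; omega
      · exact ⟨x/p - 1, by omega⟩
    have hx1 : x - 1 = (p - 1) + m * p := by
      have h1 := Nat.div_add_mod x p
      rw [hm] at h1
      have h2 : p * (m+1) = m*p + p := by ring
      omega
    have hd : (x-1)/p = m := by
      rw [hx1, Nat.add_mul_div_right _ _ hp, Nat.div_eq_of_lt (by omega)]; omega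
    have hmo : (x-1)%p = p - 1 := by
      rw [hx1, Nat.add_mul_mod_self_right, Nat.mod_eq_of_lt (by omega)]
    omega
  · left
    have hx1 : x - 1 = (x % p - 1) + (x / p) * p := by
      have h1 := Nat.mod_add_div' x p
      omega
    have hd : (x-1)/p = x/p := by
      rw [hx1, Nat.add_mul_div_right _ _ hp, Nat.div_eq_of_lt (by omega)]; omega
    have hmo : (x-1)%p = x%p - 1 := by
      rw [hx1, Nat.add_mul_mod_self_right, Nat.mod_eq_of_lt (by omega)]
    omega

lemma g_succ (n k ℓ : ℕ) (hk : 1 ≤ k) (hn : 1 ≤ n) :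
    g n k (ℓ+1) = g ((n-1)/2) k ℓ + g (n/2) k ℓ := by
  have hp : 0 < 2^ℓ := Nat.pow_pos (by norm_num)
  have h2p : (2:ℕ)^(ℓ+1) = 2 * 2^ℓ := by rw [pow_succ]; ring
  have e1 : n / 2^(ℓ+1) = (n/2) / 2^ℓ := by
    rw [h2p, ← Nat.div_div_eq_div_mul]
  have e2 : n % 2^(ℓ+1) = 2 * ((n/2) % 2^ℓ) + n % 2 := by
    rw [h2p]
    conv_lhs => rw [← Nat.div_add_mod (n % (2 * 2^ℓ)) 2]
    rw [Nat.mod_mul_right_div_self, Nat.mod_mod_of_dvd n ⟨2^ℓ, rfl⟩]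
  have hm : (n % 2 = 1 ∧ (n-1)/2 = n/2) ∨ (n % 2 = 0 ∧ (n-1)/2 + 1 = n/2) := by omega
  have hB2 : n/2 % 2^ℓ < 2^ℓ := Nat.mod_lt _ hp
  have hB1 : (n-1)/2 % 2^ℓ < 2^ℓ := Nat.mod_lt _ hp
  have hcase :
      (n % 2 = 1 ∧ (n-1)/2/2^ℓ = n/2/2^ℓ ∧ (n-1)/2 % 2^ℓ = n/2 % 2^ℓ)
    ∨ (n % 2 = 0 ∧ (n-1)/2/2^ℓ = n/2/2^ℓ ∧ (n-1)/2 % 2^ℓ + 1 = n/2 % 2^ℓ)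
    ∨ (n % 2 = 0 ∧ (n-1)/2/2^ℓ + 1 = n/2/2^ℓ ∧ (n-1)/2 % 2^ℓ + 1 = 2^ℓ ∧ n/2 % 2^ℓ = 0) := by
    rcases hm with ⟨h1, h2⟩ | ⟨h1, h2⟩
    · left; rw [h2]; exact ⟨h1, rfl, rfl⟩
    · have hx : (n-1)/2 = n/2 - 1 := by omega
      have hx2 : 1 ≤ n/2 := by omega
      rw [hx]
      rcases pred_div (n/2) (2^ℓ) hx2 hp with ⟨ha, hb⟩ | ⟨ha, hb, hc⟩
      · right; left; exact ⟨h1, ha, by omega⟩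
      · right; right; exact ⟨h1, ha, hb, hc⟩
  unfold g
  rw [e1, e2, h2p]
  split_ifs <;> omega

lemma g_zero_of_lt {a k ℓ : ℕ} (hk : 1 ≤ k) (h : a < 2^ℓ) : g a k ℓ = 0 := by
  unfold g
  rw [Nat.div_eq_of_lt h]
  split_ifs with h1 h2
  · omega
  · exact h2.elim
  · rfl

lemma sum_ext (a k N : ℕ) (hk : 1 ≤ k) (h : a ≤ N) :
    ∑ ℓ ∈ Finset.range N, g a k ℓ = ∑ ℓ ∈ Finset.range a, g a k ℓ := by
  refine (Finset.sum_subset (Finset.range_subset_range.2 h) ?_).symm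
  intro x _ hnx
  simp only [Finset.mem_range, not_lt] at hnx
  exact g_zero_of_lt hk (lt_of_le_of_lt hnx ((Nat.lt_two_pow_self (n := x))))

lemma count_S (n : ℕ) (k : ℕ) (hk : 1 ≤ k) :
    Multiset.count k (S n) = ∑ ℓ ∈ Finset.range n, g n k ℓ := by
  induction n using Nat.strong_induction_on with
  | _ n ih =>
    match n with
    | 0 => simp [S]
    | m + 1 =>
      rw [show S (m+1) = (m+1) ::ₘ (S (m/2) + S ((m+1)/2)) from by rw [S]]
      rw [Multiset.count_cons, Multiset.count_add,
        ih (m/2) (by omega), ih ((m+1)/2) (by omega)]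
      rw [Finset.sum_range_succ']
      have hg0 : g (m+1) k 0 = if k = m+1 then 1 else 0 := by
        unfold g
        simp only [pow_zero, Nat.div_one, Nat.mod_one]
        split_ifs <;> omega
      have hgs : ∀ ℓ ∈ Finset.range m, g (m+1) k (ℓ+1) = g (m/2) k ℓ + g ((m+1)/2) k ℓ := by
        intro ℓ _
        have h := g_succ (m+1) k ℓ hk (by omega)
        simpa using h
      rw [Finset.sum_congr rfl hgs, Finset.sum_add_distrib, hg0,
        sum_ext (m/2) k m hk (by omega), sum_ext ((m+1)/2) k m hk (by omega)]

lemma chain (n a b : ℕ) (h : a ≤ b) : n / 2^b = n / 2^a / 2^(b-a) := by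
  rw [Nat.div_div_eq_div_mul, ← pow_add, Nat.add_sub_cancel' h]

lemma halve_le (x e : ℕ) (he : 1 ≤ e) : x / 2^e ≤ x / 2 :=
  Nat.div_le_div_left (by calc (2:ℕ) = 2^1 := by norm_num
                            _ ≤ 2^e := Nat.pow_le_pow_right (by norm_num) he) (by norm_num)

lemma g_nonzero {n k b : ℕ} (h : g n k b ≠ 0) : n / 2^b = k ∨ n / 2^b = k + 1 := by
  by_contra hne
  push_neg at hne
  unfold g at h
  rw [if_neg hne.1, if_neg hne.2] at h
  exact h rfl

lemma g_vanish {n k c ℓ b : ℕ} (hk : 2 ≤ k) (hc : c = k ∨ c = k + 1)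
    (hq : n / 2^ℓ = c) (hb : b ≠ ℓ) : g n k b = 0 := by
  by_contra h
  have ht := g_nonzero h
  rcases Nat.lt_or_ge b ℓ with hlt | hge
  · -- b < ℓ : c ≤ (n/2^b)/2
    have hch := chain n b ℓ (le_of_lt hlt)
    have hle : n / 2^b / 2^(ℓ-b) ≤ n / 2^b / 2 := halve_le _ _ (by omega)
    have hfin : c ≤ n / 2^b / 2 := by rw [← hq, hch]; exact hle
    rcases ht with h' | h' <;> rw [h'] at hfin <;> omega
  · have hgt : ℓ < b := by omega
    have hch := chain n ℓ b (le_of_lt hgt)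
    have hle : n / 2^ℓ / 2^(b-ℓ) ≤ n / 2^ℓ / 2 := halve_le _ _ (by omega)
    have hfin : n / 2^b ≤ c / 2 := by rw [hch, hq] at *; exact hle
    rcases ht with h' | h' <;> rw [h'] at hfin <;> omega

/-- Theorem (multiplicities in `S n` for `n ≥ k ≥ 2`). -/
theorem stmt1 (n k : ℕ) (hk : 2 ≤ k) (hkn : k ≤ n) :
    (∀ ℓ : ℕ, ℓ + 1 ≤ Nat.log 2 n → k = n / 2 ^ ℓ →
      Multiset.count k (S n) = 1 + n % 2 ^ ℓ) ∧
    (∀ ℓ : ℕ, (2 : ℚ) ^ ℓ ≤ (n : ℚ) / 3 → k = n / 2 ^ ℓ - 1 →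
      (Multiset.count k (S n) : ℤ) = 2 ^ ℓ - 1 - ((n % 2 ^ ℓ : ℕ) : ℤ)) ∧
    ((¬ ∃ ℓ : ℕ, ℓ + 1 ≤ Nat.log 2 n ∧ k = n / 2 ^ ℓ) →
      (¬ ∃ ℓ : ℕ, (2 : ℚ) ^ ℓ ≤ (n : ℚ) / 3 ∧ k = n / 2 ^ ℓ - 1) →
      Multiset.count k (S n) = 0) := by
  refine ⟨?_, ?_, ?_⟩
  · intro ℓ _ hkeq
    have hp : 0 < 2^ℓ := Nat.pow_pos (by norm_num)
    have hq : n / 2^ℓ = k := hkeq.symm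
    have hn2 : 2 * 2^ℓ ≤ n := by
      have h2 : 2 ≤ n / 2^ℓ := by omega
      have := (Nat.le_div_iff_mul_le hp).1 h2
      omega
    have hℓn : ℓ < n := by
      have := Nat.lt_two_pow_self (n := ℓ)
      omega
    rw [count_S n k (by omega), Finset.sum_eq_single ℓ]
    · unfold g
      rw [if_pos hq]
      omega
    · intro b _ hbne
      exact g_vanish hk (Or.inl rfl) hq hbne
    · intro habs
      exact absurd (Finset.mem_range.2 hℓn) habs
  · intro ℓ hrat hkeq
    have hp : 0 < 2^ℓ := Nat.pow_pos (by norm_num)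
    have h3 : 3 * 2^ℓ ≤ n := by
      rw [le_div_iff₀ (by norm_num : (0:ℚ) < 3)] at hrat
      have h' : ((2^ℓ * 3 : ℕ) : ℚ) ≤ (n : ℚ) := by push_cast; linarith
      have := Nat.cast_le.1 h'
      omega
    have hq3 : 3 ≤ n / 2^ℓ := (Nat.le_div_iff_mul_le hp).2 (by omega)
    have hq : n / 2^ℓ = k + 1 := by omega
    have hℓn : ℓ < n := by
      have := Nat.lt_two_pow_self (n := ℓ)
      omega
    have hcount : Multiset.count k (S n) = 2^ℓ - 1 - n % 2^ℓ := by
      rw [count_S n k (by omega), Finset.sum_eq_single ℓ]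
      · unfold g
        rw [if_neg (by omega), if_pos hq]
      · intro b _ hbne
        exact g_vanish hk (Or.inr rfl) hq hbne
      · intro habs
        exact absurd (Finset.mem_range.2 hℓn) habs
    have hr : n % 2^ℓ < 2^ℓ := Nat.mod_lt _ hp
    have hcast : (((2:ℕ)^ℓ : ℕ) : ℤ) = (2:ℤ)^ℓ := by push_cast; ring
    rw [← hcast]
    omega
  · intro h1 h2
    rw [count_S n k (by omega)]
    apply Finset.sum_eq_zero
    intro b _
    by_contra hgb
    have hp : 0 < 2^b := Nat.pow_pos (by norm_num)
    rcases g_nonzero hgb with h | h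
    · apply h1
      refine ⟨b, ?_, h.symm⟩
      have h2le : 2 ≤ n / 2^b := by omega
      have h2n : 2 * 2^b ≤ n := (Nat.le_div_iff_mul_le hp).1 h2le
      have hpow : 2^(b+1) ≤ n := by rw [pow_succ]; omega
      exact (Nat.le_log_iff_pow_le (by norm_num) (by omega)).2 hpow
    · apply h2
      refine ⟨b, ?_, by omega⟩
      have h3le : 3 ≤ n / 2^b := by omega
      have h3n : 3 * 2^b ≤ n := (Nat.le_div_iff_mul_le hp).1 h3le
      rw [le_div_iff₀ (by norm_num : (0:ℚ) < 3)]
      have : ((3 * 2^b : ℕ) : ℚ) ≤ (n : ℚ) := Nat.cast_le.2 h3n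
      push_cast at this ⊢
      linarith
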